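/- For every mixed Nash equilibrium (σ¹*,σ²*) of the routing game (p₁>α, p₂>1, Assumption 1), the expected effective value of the max-flow-min-cost flow x* under the attacker's equilibrium strategy satisfies E_{σ²*}[F((x*)^μ)] = Θ − E_{σ²*}[C₂(μ)]. -/

import Mathlib

open scoped BigOperators Classical

/-- A capacitated network given by its finite edge set, capacities, per-unit
transportation costs, and the (edge sets of its) `s`-`t` paths and loops. -/
structure Network where
  E : Type
  fin : Fintype E
  dec : DecidableEq E
  /-- edge capacities -/
  c : E → ℝ
  /-- per-unit transportation costs -/
  b : E → ℝ
  /-- the `s`-`t` paths, identified with their edge sets -/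
  P : Finset (Finset E)
  /-- the loops, identified with their edge sets -/
  L : Finset (Finset E)
  c_nonneg : ∀ e, 0 ≤ c e
  b_nonneg : ∀ e, 0 ≤ b e
  P_nonempty : P.Nonempty
  P_edges_nonempty : ∀ p ∈ P, p.Nonempty

attribute [instance] Network.fin Network.dec

namespace Network

variable (N : Network)

/-- All paths and loops. -/
noncomputable def Lam : Finset (Finset N.E) := N.P ∪ N.L

/-- The flow through edge `e` induced by the path/loop flow `y`. -/
noncomputable def edgeFlow (y : Finset N.E → ℝ) (e : N.E) : ℝ :=
  ∑ l ∈ N.Lam.filter (fun l => e ∈ l), y l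

/-- Feasibility of a path/loop flow: nonnegative, supported on paths and loops,
and respecting edge capacities. -/
def Feasible (y : Finset N.E → ℝ) : Prop :=
  (∀ l, 0 ≤ y l) ∧ (∀ l, l ∉ N.Lam → y l = 0) ∧ (∀ e, N.edgeFlow y e ≤ N.c e)

/-- The value `F(x)` of the initial flow: total flow on `s`-`t` paths. -/
noncomputable def val (y : Finset N.E → ℝ) : ℝ := ∑ p ∈ N.P, y p

/-- The value `F(x^μ)` of the effective flow after the attack `μ`:
only the flow on paths avoiding all disrupted edges survives. -/
noncomputable def effVal (y : Finset N.E → ℝ) (μ : Finset N.E) : ℝ :=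
  ∑ p ∈ N.P.filter (fun p => Disjoint p μ), y p

/-- Transportation cost `C₁(x) = Σ b_e x_e`. -/
noncomputable def C1 (y : Finset N.E → ℝ) : ℝ := ∑ e, N.b e * N.edgeFlow y e

/-- Cost of an attack, `C₂(μ) = Σ_{e ∈ μ} c_e`. -/
noncomputable def C2 (μ : Finset N.E) : ℝ := ∑ e ∈ μ, N.c e

/-- Transportation cost of a path. -/
noncomputable def pathCost (p : Finset N.E) : ℝ := ∑ e ∈ p, N.b e

/-- `α`: the minimum transportation cost over all `s`-`t` paths. -/
noncomputable def alpha : ℝ := sInf (N.pathCost '' ↑N.P)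

/-- A cut: a set of edges meeting every `s`-`t` path. -/
def IsCut (K : Finset N.E) : Prop := ∀ p ∈ N.P, ¬ Disjoint p K

/-- A minimum cut: a cut of minimum capacity. -/
def IsMinCut (K : Finset N.E) : Prop := N.IsCut K ∧ ∀ K', N.IsCut K' → N.C2 K ≤ N.C2 K'

/-- `Θ`: the maximum flow value. -/
noncomputable def Theta : ℝ := sSup (N.val '' {y | N.Feasible y})

/-- A maximum flow. -/
def IsMaxFlow (y : Finset N.E → ℝ) : Prop :=
  N.Feasible y ∧ ∀ z, N.Feasible z → N.val z ≤ N.val y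

/-- A maximum flow with minimum transportation cost (an element of `Ω`). -/
def IsMFMC (y : Finset N.E → ℝ) : Prop :=
  N.IsMaxFlow y ∧ ∀ z, N.IsMaxFlow z → N.C1 y ≤ N.C1 z

/-- Assumption 1: `x` is a max-flow with minimum transportation cost all of whose
positively used `s`-`t` paths have transportation cost exactly `α`. -/
def Assumption1 (x : Finset N.E → ℝ) : Prop :=
  N.IsMFMC x ∧ ∀ p ∈ N.P, 0 < x p → N.pathCost p = N.alpha

/-- Defender's payoff `u₁(x,μ) = p₁ F(x^μ) - C₁(x)`. -/
noncomputable def u1 (p1 : ℝ) (y : Finset N.E → ℝ) (μ : Finset N.E) : ℝ :=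
  p1 * N.effVal y μ - N.C1 y

/-- Attacker's payoff `u₂(x,μ) = p₂ F(x - x^μ) - C₂(μ)`. -/
noncomputable def u2 (p2 : ℝ) (y : Finset N.E → ℝ) (μ : Finset N.E) : ℝ :=
  p2 * (N.val y - N.effVal y μ) - N.C2 μ

/-- The defender's action set: feasible flows. -/
def Flow : Type := {y : Finset N.E → ℝ // N.Feasible y}

/-- A (finitely supported) mixed strategy of the defender. -/
def MixedF (σ : N.Flow →₀ ℝ) : Prop := (∀ y, 0 ≤ σ y) ∧ (σ.sum fun _ w => w) = 1

/-- A mixed strategy of the attacker. -/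
def MixedA (σ : Finset N.E → ℝ) : Prop := (∀ μ, 0 ≤ σ μ) ∧ ∑ μ, σ μ = 1

/-- Expectation of a function of the flow under the defender's mixed strategy. -/
noncomputable def expF (σ : N.Flow →₀ ℝ) (g : (Finset N.E → ℝ) → ℝ) : ℝ :=
  σ.sum fun y w => w * g y.1

/-- Expectation of a function of the attack under the attacker's mixed strategy. -/
noncomputable def expA (σ : Finset N.E → ℝ) (h : Finset N.E → ℝ) : ℝ :=
  ∑ μ, σ μ * h μ

/-- Expectation of a function of both actions under a mixed strategy profile. -/
noncomputable def expFA (σ1 : N.Flow →₀ ℝ) (σ2 : Finset N.E → ℝ)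
    (g : (Finset N.E → ℝ) → Finset N.E → ℝ) : ℝ :=
  σ1.sum fun y w => w * ∑ μ, σ2 μ * g y.1 μ

/-- Defender's expected payoff. -/
noncomputable def U1 (p1 : ℝ) (σ1 : N.Flow →₀ ℝ) (σ2 : Finset N.E → ℝ) : ℝ :=
  N.expFA σ1 σ2 (N.u1 p1)

/-- Attacker's expected payoff. -/
noncomputable def U2 (p2 : ℝ) (σ1 : N.Flow →₀ ℝ) (σ2 : Finset N.E → ℝ) : ℝ :=
  N.expFA σ1 σ2 (N.u2 p2)

/-- Mixed Nash equilibrium. -/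
def IsNE (p1 p2 : ℝ) (σ1 : N.Flow →₀ ℝ) (σ2 : Finset N.E → ℝ) : Prop :=
  N.MixedF σ1 ∧ N.MixedA σ2 ∧
  (∀ τ1, N.MixedF τ1 → N.U1 p1 τ1 σ2 ≤ N.U1 p1 σ1 σ2) ∧
  (∀ τ2, N.MixedA τ2 → N.U2 p2 σ1 τ2 ≤ N.U2 p2 σ1 σ2)

/-- Pure Nash equilibrium. -/
def IsPureNE (p1 p2 : ℝ) (x : Finset N.E → ℝ) (μ : Finset N.E) : Prop :=
  N.Feasible x ∧
  (∀ y, N.Feasible y → N.u1 p1 y μ ≤ N.u1 p1 x μ) ∧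
  (∀ ν, N.u2 p2 x ν ≤ N.u2 p2 x μ)

end Network

namespace Network

variable (N : Network)

lemma P_subset_Lam : N.P ⊆ N.Lam := Finset.subset_union_left

lemma pathCost_nonneg (l : Finset N.E) : 0 ≤ N.pathCost l :=
  Finset.sum_nonneg fun e _ => N.b_nonneg e

lemma alpha_nonneg : 0 ≤ N.alpha := by
  obtain ⟨p, hp⟩ := N.P_nonempty
  refine le_csInf ⟨N.pathCost p, ⟨p, hp, rfl⟩⟩ ?_
  rintro v ⟨q, hq, rfl⟩
  exact N.pathCost_nonneg q

lemma alpha_le_pathCost {p : Finset N.E} (hp : p ∈ N.P) : N.alpha ≤ N.pathCost p := by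
  refine csInf_le ⟨0, ?_⟩ ⟨p, hp, rfl⟩
  rintro v ⟨q, hq, rfl⟩
  exact N.pathCost_nonneg q

lemma theta_eq_of_isMaxFlow {x : Finset N.E → ℝ} (h : N.IsMaxFlow x) :
    N.Theta = N.val x := by
  refine IsGreatest.csSup_eq ⟨⟨x, h.1, rfl⟩, ?_⟩
  rintro v ⟨y, hy, rfl⟩
  exact h.2 y hy

lemma effVal_le_val {y : Finset N.E → ℝ} (hy : N.Feasible y) (μ : Finset N.E) :
    N.effVal y μ ≤ N.val y :=
  Finset.sum_le_sum_of_subset_of_nonneg (Finset.filter_subset _ _)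
    (fun p _ _ => hy.1 p)

lemma C2_nonneg (μ : Finset N.E) : 0 ≤ N.C2 μ :=
  Finset.sum_nonneg fun e _ => N.c_nonneg e

lemma C1_eq_sum (y : Finset N.E → ℝ) :
    N.C1 y = ∑ l ∈ N.Lam, y l * N.pathCost l := by
  unfold C1 edgeFlow pathCost
  simp_rw [Finset.mul_sum, Finset.sum_filter]
  rw [Finset.sum_comm]
  refine Finset.sum_congr rfl fun l _ => ?_
  rw [Finset.sum_ite_mem, Finset.univ_inter]
  exact Finset.sum_congr rfl fun e _ => mul_comm _ _


lemma val_sub_effVal_le_C2 {y : Finset N.E → ℝ} (hy : N.Feasible y) (μ : Finset N.E) :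
    N.val y - N.effVal y μ ≤ N.C2 μ := by
  have hsplit := Finset.sum_filter_add_sum_filter_not N.P (fun p => Disjoint p μ) y
  have h1 : N.val y - N.effVal y μ
      = ∑ p ∈ N.P.filter (fun p => ¬ Disjoint p μ), y p := by
    unfold val effVal; linarith
  rw [h1]
  have h2 : ∀ p ∈ N.P.filter (fun p => ¬ Disjoint p μ),
      y p ≤ ∑ e ∈ μ, (if e ∈ p then y p else 0) := by
    intro p hp
    obtain ⟨e0, he0p, he0μ⟩ := Finset.not_disjoint_iff.1 (Finset.mem_filter.1 hp).2
    have := Finset.single_le_sum (f := fun e => if e ∈ p then y p else 0)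
      (fun e _ => by by_cases h : e ∈ p <;> simp [h, hy.1 p]) he0μ
    simpa [he0p] using this
  calc ∑ p ∈ N.P.filter (fun p => ¬ Disjoint p μ), y p
      ≤ ∑ p ∈ N.P.filter (fun p => ¬ Disjoint p μ), ∑ e ∈ μ, (if e ∈ p then y p else 0) :=
        Finset.sum_le_sum h2
    _ = ∑ e ∈ μ, ∑ p ∈ N.P.filter (fun p => ¬ Disjoint p μ), (if e ∈ p then y p else 0) :=
        Finset.sum_comm
    _ ≤ ∑ e ∈ μ, N.c e := ?_
  refine Finset.sum_le_sum fun e _ => ?_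
  rw [← Finset.sum_filter]
  refine le_trans ?_ (hy.2.2 e)
  unfold edgeFlow
  refine Finset.sum_le_sum_of_subset_of_nonneg ?_ (fun l _ _ => hy.1 l)
  intro p hp
  simp only [Finset.mem_filter] at hp ⊢
  exact ⟨N.P_subset_Lam hp.1.1, hp.2⟩

end Network
namespace Network

variable (N : Network)

lemma feasible_update_zero {x : Finset N.E → ℝ} (hx : N.Feasible x) (l : Finset N.E) :
    N.Feasible (Function.update x l 0) := by
  refine ⟨fun m => ?_, fun m hm => ?_, fun e => ?_⟩
  · by_cases hm : m = l
    · subst hm; simp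
    · rw [Function.update_of_ne hm]; exact hx.1 m
  · by_cases hml : m = l
    · subst hml; simp
    · rw [Function.update_of_ne hml]; exact hx.2.1 m hm
  · refine le_trans (Finset.sum_le_sum fun m _ => ?_) (hx.2.2 e)
    by_cases hm : m = l
    · subst hm; simp [hx.1 m]
    · rw [Function.update_of_ne hm]

lemma C1_eq_alpha_theta {x : Finset N.E → ℝ} (h : N.Assumption1 x) :
    N.C1 x = N.alpha * N.Theta := by
  obtain ⟨⟨⟨hfeas, hmax⟩, hmincost⟩, hα⟩ := h
  have hθ : N.Theta = N.val x := N.theta_eq_of_isMaxFlow ⟨hfeas, hmax⟩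
  rw [N.C1_eq_sum]
  have hsplit := Finset.sum_filter_add_sum_filter_not N.Lam (fun l => l ∈ N.P)
    (fun l => x l * N.pathCost l)
  have hPfilter : N.Lam.filter (fun l => l ∈ N.P) = N.P := by
    rw [Finset.filter_mem_eq_inter]
    exact Finset.inter_eq_right.mpr N.P_subset_Lam
  -- the loop part vanishes
  have hloop : ∀ l ∈ N.Lam.filter (fun l => l ∉ N.P), x l * N.pathCost l = 0 := by
    intro l hl
    rw [Finset.mem_filter] at hl
    obtain ⟨hlLam, hlP⟩ := hl
    have hnonneg : 0 ≤ x l * N.pathCost l :=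
      mul_nonneg (hfeas.1 l) (N.pathCost_nonneg l)
    -- the updated flow is still a max flow
    have hval : N.val (Function.update x l 0) = N.val x := by
      refine Finset.sum_congr rfl fun p hp => ?_
      have hne : p ≠ l := fun hpl => hlP (by rw [← hpl]; exact hp)
      exact Function.update_of_ne hne _ _
    have hmax' : N.IsMaxFlow (Function.update x l 0) :=
      ⟨N.feasible_update_zero ⟨hfeas.1, hfeas.2.1, hfeas.2.2⟩ l,
        fun z hz => by rw [hval]; exact hmax z hz⟩
    have hle : N.C1 x ≤ N.C1 (Function.update x l 0) := hmincost _ hmax'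
    have hC1u : N.C1 (Function.update x l 0) = N.C1 x - x l * N.pathCost l := by
      rw [N.C1_eq_sum, N.C1_eq_sum]
      have h1 : ∀ m ∈ N.Lam, Function.update x l 0 m * N.pathCost m
          = Function.update (fun m => x m * N.pathCost m) l 0 m := by
        intro m _
        by_cases hm : m = l
        · subst hm; simp
        · rw [Function.update_of_ne hm, Function.update_of_ne hm]
      rw [Finset.sum_congr rfl h1, Finset.sum_update_of_mem hlLam,
        ← Finset.add_sum_erase _ _ hlLam, Finset.sdiff_singleton_eq_erase]
      ring
    linarith
  have hloopsum : ∑ l ∈ N.Lam.filter (fun l => l ∉ N.P), x l * N.pathCost l = 0 :=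
    Finset.sum_eq_zero hloop
  have hPsum : ∑ p ∈ N.P, x p * N.pathCost p = N.alpha * N.val x := by
    unfold val
    rw [Finset.mul_sum]
    refine Finset.sum_congr rfl fun p hp => ?_
    rcases lt_or_eq_of_le (hfeas.1 p) with hpos | hzero
    · rw [hα p hp hpos]; ring
    · rw [← hzero]; ring
  rw [hPfilter] at hsplit
  rw [← hsplit, hloopsum, hPsum, hθ]
  ring
end Network
namespace Network

variable (N : Network)

lemma alpha_val_le_C1 {y : Finset N.E → ℝ} (hy : N.Feasible y) :
    N.alpha * N.val y ≤ N.C1 y := by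
  rw [N.C1_eq_sum]
  have h1 : ∑ p ∈ N.P, y p * N.pathCost p ≤ ∑ l ∈ N.Lam, y l * N.pathCost l :=
    Finset.sum_le_sum_of_subset_of_nonneg N.P_subset_Lam
      (fun l _ _ => mul_nonneg (hy.1 l) (N.pathCost_nonneg l))
  have h2 : N.alpha * N.val y ≤ ∑ p ∈ N.P, y p * N.pathCost p := by
    unfold val
    rw [Finset.mul_sum]
    refine Finset.sum_le_sum fun p hp => ?_
    rw [mul_comm]
    exact mul_le_mul_of_nonneg_left (N.alpha_le_pathCost hp) (hy.1 p)
  linarith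

lemma feasible_zero : N.Feasible (fun _ => 0) := by
  refine ⟨fun _ => le_refl 0, fun _ _ => rfl, fun e => ?_⟩
  have : N.edgeFlow (fun _ => 0) e = 0 := Finset.sum_const_zero
  rw [this]; exact N.c_nonneg e

lemma effVal_zero (μ : Finset N.E) : N.effVal (fun _ => 0) μ = 0 :=
  Finset.sum_const_zero

lemma C1_zero : N.C1 (fun _ => 0) = 0 := by
  unfold C1
  refine Finset.sum_eq_zero fun e _ => ?_
  have : N.edgeFlow (fun _ => 0) e = 0 := Finset.sum_const_zero
  rw [this, mul_zero]

lemma effVal_cut_eq_zero {K : Finset N.E} (hK : N.IsCut K) (y : Finset N.E → ℝ) :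
    N.effVal y K = 0 := by
  unfold effVal
  rw [Finset.filter_false_of_mem (fun p hp => hK p hp), Finset.sum_empty]

lemma effVal_empty (y : Finset N.E → ℝ) : N.effVal y ∅ = N.val y := by
  unfold effVal val
  rw [Finset.filter_true_of_mem (fun p _ => Finset.disjoint_empty_right p)]

end Network
/-- at every mixed Nash equilibrium (`p₁ > α`, `p₂ > 1`, Assumption 1),
the expected effective value of the max-flow-min-cost flow `x*` under the attacker's
equilibrium strategy satisfies `E_{σ²*}[F((x*)^μ)] = Θ − E_{σ²*}[C₂(μ)]`. -/
theorem expected_effective_value_of_mfmc_flow (N : Network) (p1 p2 : ℝ)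
    (hp1 : N.alpha < p1) (hp2 : 1 < p2)
    (xs : N.Flow) (hxs : N.Assumption1 xs.1)
    (hMFMC : ∃ K, N.IsMinCut K ∧ N.C2 K = N.Theta)
    (σ1 : N.Flow →₀ ℝ) (σ2 : Finset N.E → ℝ)
    (hNE : N.IsNE p1 p2 σ1 σ2) :
    N.expA σ2 (fun μ => N.effVal xs.1 μ) = N.Theta - N.expA σ2 N.C2 := by
  obtain ⟨⟨hσ1pos, hσ1sum⟩, ⟨hσ2pos, hσ2sum⟩, hD1, hD2⟩ := hNE
  obtain ⟨K, ⟨hKcut, _hKmin⟩, hKval⟩ := hMFMC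
  have hα0 := N.alpha_nonneg
  have hp1pos : 0 < p1 := lt_of_le_of_lt hα0 hp1
  have hxmaxflow : N.IsMaxFlow xs.1 := hxs.1.1
  have hθx : N.Theta = N.val xs.1 := N.theta_eq_of_isMaxFlow hxmaxflow
  have hC1xs : N.C1 xs.1 = N.alpha * N.Theta := N.C1_eq_alpha_theta hxs
  have hw1 : ∑ y ∈ σ1.support, σ1 y = 1 := hσ1sum
  show (∑ μ, σ2 μ * N.effVal xs.1 μ) = N.Theta - ∑ μ, σ2 μ * N.C2 μ
  set Fb := ∑ y ∈ σ1.support, σ1 y * N.val y.1 with hFbdef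
  set Gb := ∑ y ∈ σ1.support, σ1 y * ∑ μ, σ2 μ * N.effVal y.1 μ with hGbdef
  set Cb := ∑ y ∈ σ1.support, σ1 y * N.C1 y.1 with hCbdef
  set Ca := ∑ μ, σ2 μ * N.C2 μ with hCadef
  set D := ∑ μ, σ2 μ * N.effVal xs.1 μ with hDdef
  set V1 := N.U1 p1 σ1 σ2 with hV1def
  set V2 := N.U2 p2 σ1 σ2 with hV2def
  -- inner expectation over the attacker for the defender's payoff
  have hinner1 : ∀ y : Finset N.E → ℝ,
      (∑ μ, σ2 μ * (p1 * N.effVal y μ - N.C1 y))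
        = p1 * (∑ μ, σ2 μ * N.effVal y μ) - N.C1 y := by
    intro y
    rw [Finset.sum_congr rfl
      (fun μ _ => by ring :
        ∀ μ ∈ Finset.univ, σ2 μ * (p1 * N.effVal y μ - N.C1 y)
          = p1 * (σ2 μ * N.effVal y μ) - σ2 μ * N.C1 y),
      Finset.sum_sub_distrib, ← Finset.mul_sum, ← Finset.sum_mul, hσ2sum, one_mul]
  -- V1 = p1 * Gb - Cb
  have hU1rfl : N.U1 p1 σ1 σ2
      = ∑ y ∈ σ1.support, σ1 y * ∑ μ, σ2 μ * (p1 * N.effVal y.1 μ - N.C1 y.1) := rfl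
  have hV1eq : V1 = p1 * Gb - Cb := by
    rw [hV1def, hU1rfl, hGbdef, hCbdef, Finset.mul_sum, ← Finset.sum_sub_distrib]
    refine Finset.sum_congr rfl fun y _ => ?_
    rw [hinner1 y.1]; ring
  -- V2 = p2 * (Fb - Gb) - Ca
  have hU2rfl : ∀ τ2 : Finset N.E → ℝ, N.U2 p2 σ1 τ2
      = ∑ y ∈ σ1.support, σ1 y * ∑ μ, τ2 μ * (p2 * (N.val y.1 - N.effVal y.1 μ) - N.C2 μ) :=
    fun _ => rfl
  have hV2eq : V2 = p2 * (Fb - Gb) - Ca := by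
    rw [hV2def, hU2rfl]
    have hinner2 : ∀ y : Finset N.E → ℝ,
        (∑ μ, σ2 μ * (p2 * (N.val y - N.effVal y μ) - N.C2 μ))
          = p2 * N.val y - p2 * (∑ μ, σ2 μ * N.effVal y μ) - Ca := by
      intro y
      rw [Finset.sum_congr rfl
        (fun μ _ => by ring :
          ∀ μ ∈ Finset.univ, σ2 μ * (p2 * (N.val y - N.effVal y μ) - N.C2 μ)
            = p2 * (σ2 μ * N.val y) - p2 * (σ2 μ * N.effVal y μ) - σ2 μ * N.C2 μ),
        Finset.sum_sub_distrib, Finset.sum_sub_distrib, ← Finset.mul_sum, ← Finset.mul_sum,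
        ← Finset.sum_mul, hσ2sum, one_mul, hCadef]
    rw [Finset.sum_congr rfl (fun y _ => by rw [hinner2 y.1])]
    rw [Finset.sum_congr rfl
      (fun y _ => by ring :
        ∀ y ∈ σ1.support, σ1 y * (p2 * N.val y.1 - p2 * (∑ μ, σ2 μ * N.effVal y.1 μ) - Ca)
          = p2 * (σ1 y * N.val y.1) - p2 * (σ1 y * ∑ μ, σ2 μ * N.effVal y.1 μ) - σ1 y * Ca),
      Finset.sum_sub_distrib, Finset.sum_sub_distrib, ← Finset.mul_sum, ← Finset.mul_sum,
      ← Finset.sum_mul, hw1, one_mul, ← hFbdef, ← hGbdef]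
    ring
  -- defender deviation to the pure strategy x*
  have hdevxs : p1 * D - N.alpha * N.Theta ≤ V1 := by
    have hmix : N.MixedF (Finsupp.single xs 1) := by
      constructor
      · intro y
        rw [Finsupp.single_apply]
        split <;> norm_num
      · rw [Finsupp.sum_single_index rfl]
    have hval : N.U1 p1 (Finsupp.single xs 1) σ2 = p1 * D - N.alpha * N.Theta := by
      show (Finsupp.single xs 1).sum
        (fun y w => w * ∑ μ, σ2 μ * (p1 * N.effVal y.1 μ - N.C1 y.1))
        = p1 * D - N.alpha * N.Theta
      have hz : (fun (y : N.Flow) (w : ℝ) => w * ∑ μ, σ2 μ * (p1 * N.effVal y.1 μ - N.C1 y.1))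
          xs 0 = 0 := zero_mul _
      rw [Finsupp.sum_single_index hz, one_mul, hinner1 xs.1, hC1xs, hDdef]
    calc p1 * D - N.alpha * N.Theta = N.U1 p1 (Finsupp.single xs 1) σ2 := hval.symm
      _ ≤ V1 := hD1 _ hmix
  -- defender deviation to the zero flow
  have hdev0 : (0:ℝ) ≤ V1 := by
    have hmix : N.MixedF (Finsupp.single ⟨(fun _ => 0), N.feasible_zero⟩ 1) := by
      constructor
      · intro y
        erw [Finsupp.single_apply]
        split <;> norm_num
      · exact Finsupp.sum_single_index rfl
    have hval : N.U1 p1 (Finsupp.single ⟨(fun _ => 0), N.feasible_zero⟩ 1) σ2 = 0 := by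
      show (Finsupp.single (⟨(fun _ => 0), N.feasible_zero⟩ : N.Flow) 1).sum
        (fun y w => w * ∑ μ, σ2 μ * (p1 * N.effVal y.1 μ - N.C1 y.1)) = 0
      have hz : (fun (y : N.Flow) (w : ℝ) => w * ∑ μ, σ2 μ * (p1 * N.effVal y.1 μ - N.C1 y.1))
          (⟨(fun _ => 0), N.feasible_zero⟩ : N.Flow) 0 = 0 := zero_mul _
      rw [Finsupp.sum_single_index hz, one_mul]
      refine Finset.sum_eq_zero fun μ _ => ?_
      rw [N.effVal_zero, N.C1_zero, mul_zero, sub_zero, mul_zero]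
    calc (0:ℝ) = N.U1 p1 (Finsupp.single ⟨(fun _ => 0), N.feasible_zero⟩ 1) σ2 := hval.symm
      _ ≤ V1 := hD1 _ hmix
  -- attacker deviation to the min cut K
  have hdevK : p2 * Fb - N.Theta ≤ V2 := by
    have hmix : N.MixedA (fun μ => if μ = K then (1:ℝ) else 0) := by
      constructor
      · intro μ; by_cases h : μ = K <;> simp [h]
      · simp
    have hval : N.U2 p2 σ1 (fun μ => if μ = K then (1:ℝ) else 0) = p2 * Fb - N.Theta := by
      rw [hU2rfl]
      have hin : ∀ y : Finset N.E → ℝ,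
          (∑ μ, (if μ = K then (1:ℝ) else 0) * (p2 * (N.val y - N.effVal y μ) - N.C2 μ))
            = p2 * N.val y - N.Theta := by
        intro y
        rw [Finset.sum_eq_single K (fun b _ hb => by simp [hb]) (fun h => absurd (Finset.mem_univ K) h)]
        rw [if_pos rfl, one_mul, N.effVal_cut_eq_zero hKcut, hKval, sub_zero]
      rw [Finset.sum_congr rfl (fun y _ => by rw [hin y.1])]
      rw [Finset.sum_congr rfl
        (fun y _ => by ring :
          ∀ y ∈ σ1.support, σ1 y * (p2 * N.val y.1 - N.Theta)
            = p2 * (σ1 y * N.val y.1) - σ1 y * N.Theta),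
        Finset.sum_sub_distrib, ← Finset.mul_sum, ← Finset.sum_mul, hw1, one_mul, ← hFbdef]
    calc p2 * Fb - N.Theta = N.U2 p2 σ1 (fun μ => if μ = K then (1:ℝ) else 0) := hval.symm
      _ ≤ V2 := hD2 _ hmix
  -- attacker deviation to the empty attack
  have hdevE : (0:ℝ) ≤ V2 := by
    have hmix : N.MixedA (fun μ => if μ = (∅ : Finset N.E) then (1:ℝ) else 0) := by
      constructor
      · intro μ; by_cases h : μ = (∅ : Finset N.E) <;> simp [h]
      · simp
    have hval : N.U2 p2 σ1 (fun μ => if μ = (∅ : Finset N.E) then (1:ℝ) else 0) = 0 := by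
      rw [hU2rfl]
      refine Finset.sum_eq_zero fun y _ => ?_
      have hin : (∑ μ, (if μ = (∅ : Finset N.E) then (1:ℝ) else 0)
          * (p2 * (N.val y.1 - N.effVal y.1 μ) - N.C2 μ)) = 0 := by
        rw [Finset.sum_eq_single (∅ : Finset N.E) (fun b _ hb => by simp [hb])
          (fun h => absurd (Finset.mem_univ (∅ : Finset N.E)) h)]
        rw [if_pos rfl, one_mul, N.effVal_empty, sub_self, mul_zero]
        show (0:ℝ) - N.C2 ∅ = 0
        have hC2e : N.C2 ∅ = 0 := Finset.sum_empty
        rw [hC2e, sub_zero]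
      rw [hin, mul_zero]
    calc (0:ℝ) = N.U2 p2 σ1 (fun μ => if μ = (∅ : Finset N.E) then (1:ℝ) else 0) := hval.symm
      _ ≤ V2 := hD2 _ hmix
  -- pointwise facts in expectation
  have hCbge : N.alpha * Fb ≤ Cb := by
    rw [hFbdef, hCbdef, Finset.mul_sum]
    refine Finset.sum_le_sum fun y _ => ?_
    rw [mul_left_comm]
    exact mul_le_mul_of_nonneg_left (N.alpha_val_le_C1 y.2) (hσ1pos y)
  have hFble : Fb ≤ N.Theta := by
    calc Fb ≤ ∑ y ∈ σ1.support, σ1 y * N.Theta :=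
        Finset.sum_le_sum fun y _ => mul_le_mul_of_nonneg_left
          (hθx ▸ hxmaxflow.2 y.1 y.2) (hσ1pos y)
      _ = N.Theta := by rw [← Finset.sum_mul, hw1, one_mul]
  have hDge : N.Theta - Ca ≤ D := by
    have hterm : ∀ μ ∈ Finset.univ, σ2 μ * N.Theta - σ2 μ * N.C2 μ ≤ σ2 μ * N.effVal xs.1 μ := by
      intro μ _
      have h := N.val_sub_effVal_le_C2 xs.2 μ
      rw [← hθx] at h
      have := mul_le_mul_of_nonneg_left (by linarith : N.Theta - N.C2 μ ≤ N.effVal xs.1 μ)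
        (hσ2pos μ)
      linarith [this]
    have h1 : ∑ μ, (σ2 μ * N.Theta - σ2 μ * N.C2 μ) ≤ ∑ μ, σ2 μ * N.effVal xs.1 μ :=
      Finset.sum_le_sum hterm
    have h2 : ∑ μ, (σ2 μ * N.Theta - σ2 μ * N.C2 μ)
        = N.Theta - ∑ μ, σ2 μ * N.C2 μ := by
      rw [Finset.sum_sub_distrib, ← Finset.sum_mul, hσ2sum, one_mul]
    rw [hDdef, hCadef]
    linarith
  -- the final algebra: D ≤ Θ - Ca by a case analysis
  have hαFb : N.alpha * Fb ≤ p1 * Gb := by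
    have := hV1eq ▸ hdev0
    linarith
  have hA45 : p1 * D ≤ p1 * Gb + N.alpha * N.Theta - N.alpha * Fb := by
    have := hV1eq ▸ hdevxs
    linarith
  have hupper : D ≤ N.Theta - Ca := by
    rcases le_total (p2 * Fb) N.Theta with hcase | hcase
    · -- p2 * Fb ≤ Θ
      have hCa2 : Ca ≤ p2 * (Fb - Gb) := by
        have := hV2eq ▸ hdevE
        linarith
      have h3 : N.alpha * (N.Theta - p2 * Fb) ≤ p1 * (N.Theta - p2 * Fb) :=
        mul_le_mul_of_nonneg_right (le_of_lt hp1) (by linarith)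
      have h2 : (p2 - 1) * (N.alpha * Fb) ≤ (p2 - 1) * (p1 * Gb) :=
        mul_le_mul_of_nonneg_left hαFb (by linarith)
      have hmul : p1 * D ≤ p1 * (N.Theta - p2 * Fb + p2 * Gb) := by nlinarith
      have := (mul_le_mul_iff_right₀ hp1pos).1 hmul
      linarith
    · -- Θ ≤ p2 * Fb
      have hCa1 : Ca ≤ N.Theta - p2 * Gb := by
        have := hV2eq ▸ hdevK
        linarith
      have h1 : 0 ≤ N.alpha * (p2 * Fb - N.Theta) := mul_nonneg hα0 (by linarith)
      have h2 : (p2 - 1) * (N.alpha * Fb) ≤ (p2 - 1) * (p1 * Gb) :=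
        mul_le_mul_of_nonneg_left hαFb (by linarith)
      have hmul : p1 * D ≤ p1 * (p2 * Gb) := by nlinarith
      have := (mul_le_mul_iff_right₀ hp1pos).1 hmul
      linarith
  linarith
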